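/- arXiv:2508.12420 — 2 statements merged into one kernel-verified Lean document; each statement's English description precedes it below -/
import Mathlib

section
/- Let K be a field and let P∞ := K⸨X⸩ / (X·K⟦X⟧) be the quotient of the K⟦X⟧-module of formal Laurent series by the submodule of power series with zero constant term. Then for every nonzero power series f ∈ K⟦X⟧, the scalar multiplication map f • (−) : P∞ → P∞ is surjective, and its kernel is a K-vector subspace of P∞ of finite dimension equal to the order of f (the least n such that the n-th coefficient of f is nonzero). -/
open PowerSeries

variable {K : Type*}

instance laurentSeriesTower [Field K] : IsScalarTower K (PowerSeries K) (LaurentSeries K) :=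
  ⟨fun c f x => by
    show (HahnSeries.ofPowerSeries ℤ K) (c • f) * x = c • ((HahnSeries.ofPowerSeries ℤ K) f * x)
    rw [← HahnSeries.C_mul_eq_smul, PowerSeries.smul_eq_C_mul, map_mul,
      HahnSeries.ofPowerSeries_C, mul_assoc]⟩

/-- `P∞ = K⸨X⸩ / (X·K⟦X⟧)`: the quotient of the `K⟦X⟧`-module of formal Laurent series
by the submodule `X·K⟦X⟧` of power series with zero constant term, i.e. by the
`K⟦X⟧`-submodule generated by (the image in `K⸨X⸩` of) `X`. -/
noncomputable abbrev LaurentQuot (K : Type*) [Field K] :=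
  LaurentSeries K ⧸
    Submodule.span (PowerSeries K)
      {(algebraMap (PowerSeries K) (LaurentSeries K)) (PowerSeries.X : PowerSeries K)}

namespace LaurentQuotAux

variable (K) [Field K]

/-- The submodule `X·K⟦X⟧` of `K⸨X⸩`. -/
noncomputable abbrev SX : Submodule (PowerSeries K) (LaurentSeries K) :=
  Submodule.span (PowerSeries K)
    {(algebraMap (PowerSeries K) (LaurentSeries K)) (PowerSeries.X : PowerSeries K)}

variable {K}

lemma coeff_am (g : PowerSeries K) (n : ℤ) :
    ((algebraMap (PowerSeries K) (LaurentSeries K)) g).coeff n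
      = if n < 0 then 0 else PowerSeries.coeff n.natAbs g :=
  PowerSeries.coeff_coe g n

lemma mem_SX_iff {z : LaurentSeries K} :
    z ∈ SX K ↔ ∀ n : ℤ, n ≤ 0 → z.coeff n = 0 := by
  constructor
  · intro hz n hn
    obtain ⟨g, rfl⟩ := Submodule.mem_span_singleton.mp hz
    rw [Algebra.smul_def, ← map_mul, coeff_am]
    rcases eq_or_lt_of_le hn with h | h
    · subst h
      rw [if_neg (lt_irrefl 0), Int.natAbs_zero]
      simp
    · rw [if_pos h]
  · intro h
    by_cases hz : z = 0
    · simp [hz]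
    · have h0 : 0 < z.order := by
        by_contra hlt
        push_neg at hlt
        exact hz (HahnSeries.coeff_order_eq_zero.mp (h _ hlt))
      have ht : 1 ≤ z.order.toNat := by omega
      apply Submodule.mem_span_singleton.mpr
      refine ⟨PowerSeries.X ^ (z.order.toNat - 1) * z.powerSeriesPart, ?_⟩
      rw [Algebra.smul_def, ← map_mul]
      have h1 : PowerSeries.X ^ (z.order.toNat - 1) * z.powerSeriesPart * PowerSeries.X
          = PowerSeries.X ^ z.order.toNat * z.powerSeriesPart := by
        rw [mul_right_comm, ← pow_succ, Nat.sub_add_cancel ht]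
      rw [h1, map_mul, LaurentSeries.coe_algebraMap, HahnSeries.ofPowerSeries_X_pow,
        Int.toNat_of_nonneg h0.le]
      exact z.single_order_mul_powerSeriesPart

/-- `c • x ∈ SX` for `c : K`. -/
lemma SX_ksmul {c : K} {x : LaurentSeries K} (h : x ∈ SX K) : c • x ∈ SX K := by
  have h2 := Submodule.smul_mem (SX K) (c • (1 : PowerSeries K)) h
  rwa [smul_assoc, one_smul] at h2

lemma mul_ksmul (c : K) (a z : LaurentSeries K) : a * (c • z) = c • (a * z) := by
  rw [← HahnSeries.C_mul_eq_smul, ← HahnSeries.C_mul_eq_smul, mul_left_comm]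

/-- The quotient map as a `K`-linear map. -/
noncomputable def mkK : LaurentSeries K →ₗ[K] LaurentQuot K where
  toFun := Submodule.Quotient.mk
  map_add' _ _ := rfl
  map_smul' c a := (Submodule.Quotient.mk_smul _ c a)

/-- Coefficient extraction as a `K`-linear map. -/
noncomputable def lcoeff (n : ℤ) : LaurentSeries K →ₗ[K] K where
  toFun z := z.coeff n
  map_add' _ _ := HahnSeries.coeff_add
  map_smul' _ _ := HahnSeries.coeff_smul

/-- The map sending `c : Fin d → K` to `∑ c j • X^{-j}` in `K⸨X⸩`. -/
noncomputable def psi0 (K : Type*) [Field K] (d : ℕ) : (Fin d → K) →ₗ[K] LaurentSeries K where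
  toFun c := ∑ j : Fin d, c j • HahnSeries.single (-(j : ℤ)) (1 : K)
  map_add' a b := by simp [add_smul, Finset.sum_add_distrib]
  map_smul' r a := by simp [Finset.smul_sum, smul_smul]

lemma coeff_psi0 {d : ℕ} (c : Fin d → K) (n : ℤ) :
    (psi0 K d c).coeff n = ∑ j : Fin d, if n = -(j : ℤ) then c j else 0 := by
  have h : (psi0 K d c).coeff n = lcoeff n (psi0 K d c) := rfl
  rw [h]
  simp only [psi0, LinearMap.coe_mk, AddHom.coe_mk]
  rw [map_sum]
  simp [lcoeff, HahnSeries.coeff_smul, HahnSeries.coeff_single, mul_ite]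

lemma coeff_psi0_neg {d : ℕ} (c : Fin d → K) (i : Fin d) :
    (psi0 K d c).coeff (-(i : ℤ)) = c i := by
  rw [coeff_psi0, Finset.sum_eq_single i]
  · simp
  · intro j _ hj
    refine if_neg fun hij => hj ?_
    have : (i : ℤ) = (j : ℤ) := neg_injective hij
    exact Fin.ext (by exact_mod_cast this.symm)
  · simp

lemma coeff_psi0_low {d : ℕ} (c : Fin d → K) {n : ℤ} (hn : n ≤ -(d : ℤ)) :
    (psi0 K d c).coeff n = 0 := by
  rw [coeff_psi0]
  refine Finset.sum_eq_zero fun j _ => if_neg ?_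
  have hj : (j : ℕ) < d := j.2
  intro h
  omega

end LaurentQuotAux

open LaurentQuotAux

set_option maxHeartbeats 1000000 in
/-- For every nonzero power series `f ∈ K⟦X⟧`, scalar multiplication by `f`
on `P∞ = K⸨X⸩/(X·K⟦X⟧)` is surjective, and its kernel is a `K`-subspace of `P∞` of finite
dimension equal to the order of `f`. -/
theorem surjective_and_finrank_ker_smul_laurentQuot
    [Field K] (f : PowerSeries K) (hf : f ≠ 0) :
    Function.Surjective (fun p : LaurentQuot K => f • p) ∧
    ∃ W : Submodule K (LaurentQuot K),
      (W : Set (LaurentQuot K)) = {p : LaurentQuot K | f • p = 0} ∧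
      FiniteDimensional K W ∧
      (Module.finrank K W : ℕ∞) = f.order := by
  classical
  have hAinj : Function.Injective (algebraMap (PowerSeries K) (LaurentSeries K)) :=
    HahnSeries.ofPowerSeries_injective
  have hAf : (algebraMap (PowerSeries K) (LaurentSeries K)) f ≠ 0 := fun h =>
    hf (hAinj (by rw [h, map_zero]))
  constructor
  · -- surjectivity
    intro q
    obtain ⟨y, rfl⟩ := Submodule.Quotient.mk_surjective _ q
    refine ⟨Submodule.Quotient.mk (((algebraMap (PowerSeries K) (LaurentSeries K)) f)⁻¹ * y), ?_⟩
    show f • (Submodule.Quotient.mk _ : LaurentQuot K) = _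
    rw [← Submodule.Quotient.mk_smul, Algebra.smul_def, ← mul_assoc,
      mul_inv_cancel₀ hAf, one_mul]
  · -- kernel
    set d : ℕ := f.order.lift (order_finite_iff_ne_zero.mpr hf) with hd
    have hord : (d : ℕ∞) = f.order := ENat.coe_lift _ _
    have hfd : PowerSeries.X ^ d * divXPowOrder f = f := by
      convert X_pow_order_mul_divXPowOrder (f := f) using 3
      rw [← hord, ENat.toNat_coe]
    obtain ⟨w, hw⟩ := (isUnit_divided_by_X_pow_order hf).exists_right_inv
    have hwf : w * f = PowerSeries.X ^ d := by
      rw [← hfd, mul_comm w _, mul_assoc, hw, mul_one]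
    -- `f • ·` commutes with the `K`-action on the quotient
    have hsc : ∀ (c : K) (p : LaurentQuot K), f • (c • p) = c • (f • p) := by
      intro c p
      obtain ⟨y, rfl⟩ := Submodule.Quotient.mk_surjective _ p
      rw [← Submodule.Quotient.mk_smul, ← Submodule.Quotient.mk_smul,
        ← Submodule.Quotient.mk_smul, ← Submodule.Quotient.mk_smul]
      congr 1
      rw [Algebra.smul_def, Algebra.smul_def, mul_ksmul]
    let g : LaurentQuot K →ₗ[K] LaurentQuot K :=
      { toFun := fun p => f • p
        map_add' := smul_add f
        map_smul' := fun c p => hsc c p }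
    have hset : ((LinearMap.ker g : Submodule K (LaurentQuot K)) : Set (LaurentQuot K))
        = {p : LaurentQuot K | f • p = 0} := by
      ext p
      simp only [SetLike.mem_coe, LinearMap.mem_ker, Set.mem_setOf_eq]
      rfl
    -- the candidate basis map
    let ψ : (Fin d → K) →ₗ[K] LaurentQuot K := mkK.comp (psi0 K d)
    have hker : ∀ c : Fin d → K, ψ c = 0 → c = 0 := by
      intro c hc
      have hc' : (Submodule.Quotient.mk (psi0 K d c) : LaurentQuot K) = 0 := hc
      have hmem : psi0 K d c ∈ SX K := (Submodule.Quotient.mk_eq_zero _).mp hc'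
      funext i
      have h0 := mem_SX_iff.mp hmem (-(i : ℤ)) (by simp)
      rw [coeff_psi0_neg] at h0
      exact h0
    have hinj : Function.Injective ψ := by
      intro a b hab
      have h := hker (a - b) (by rw [map_sub, hab, sub_self])
      exact sub_eq_zero.mp h
    have hrange : LinearMap.range ψ = LinearMap.ker g := by
      apply le_antisymm
      · rintro p ⟨c, rfl⟩
        show f • (Submodule.Quotient.mk (psi0 K d c) : LaurentQuot K) = 0
        rw [← Submodule.Quotient.mk_smul, Submodule.Quotient.mk_eq_zero]
        -- f • ψ0 c = ∑ c j • (f • X^{-j})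
        have hexp : f • psi0 K d c
            = ∑ j : Fin d, c j • ((algebraMap (PowerSeries K) (LaurentSeries K)) f
                * HahnSeries.single (-(j : ℤ)) (1 : K)) := by
          rw [Algebra.smul_def]
          simp only [psi0, LinearMap.coe_mk, AddHom.coe_mk]
          rw [Finset.mul_sum]
          exact Finset.sum_congr rfl fun j _ => mul_ksmul _ _ _
        rw [hexp]
        refine Submodule.sum_mem _ fun j _ => SX_ksmul ?_
        rw [mem_SX_iff]
        intro n hn
        have hcoeff := HahnSeries.coeff_mul_single_add
          (x := (algebraMap (PowerSeries K) (LaurentSeries K)) f) (r := (1 : K))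
          (a := n + (j : ℤ)) (b := -(j : ℤ))
        rw [add_neg_cancel_right] at hcoeff
        rw [hcoeff, mul_one, coeff_am]
        by_cases hnj : n + (j : ℤ) < 0
        · rw [if_pos hnj]
        · rw [if_neg hnj]
          apply PowerSeries.coeff_of_lt_order
          rw [← hord]
          have hj : (j : ℕ) < d := j.2
          have : (n + (j : ℤ)).natAbs < d := by omega
          exact_mod_cast this
      · intro p hp
        obtain ⟨y, rfl⟩ := Submodule.Quotient.mk_surjective _ p
        have hp' : f • (Submodule.Quotient.mk y : LaurentQuot K) = 0 := hp
        rw [← Submodule.Quotient.mk_smul, Submodule.Quotient.mk_eq_zero] at hp'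
        -- low-order coefficients of y vanish
        have hz1 : w • (f • y) = HahnSeries.single (d : ℤ) 1 * y := by
          rw [Algebra.smul_def, Algebra.smul_def, ← mul_assoc, ← map_mul, hwf,
            LaurentSeries.coe_algebraMap, HahnSeries.ofPowerSeries_X_pow]
        have hzmem : HahnSeries.single (d : ℤ) 1 * y ∈ SX K :=
          hz1 ▸ Submodule.smul_mem _ w hp'
        have hlow : ∀ n : ℤ, n ≤ -(d : ℤ) → y.coeff n = 0 := by
          intro n hn
          have h1 := mem_SX_iff.mp hzmem (n + d) (by omega)
          have h2 : (HahnSeries.single (d : ℤ) (1 : K) * y).coeff (n + (d : ℤ))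
              = 1 * y.coeff n := HahnSeries.coeff_single_mul_add
          rw [h1] at h2
          rw [← one_mul (y.coeff n), ← h2]
        refine ⟨fun j => y.coeff (-(j : ℤ)), ?_⟩
        show (Submodule.Quotient.mk (psi0 K d fun j => y.coeff (-(j : ℤ))) : LaurentQuot K)
          = Submodule.Quotient.mk y
        rw [Submodule.Quotient.eq]
        rw [mem_SX_iff]
        intro n hn
        rw [HahnSeries.coeff_sub]
        rcases le_or_gt n (-(d : ℤ)) with h | h
        · rw [coeff_psi0_low _ h, hlow n h, sub_zero]
        · have hi : (-n).toNat < d := by omega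
          have hn' : n = -(((⟨(-n).toNat, hi⟩ : Fin d) : ℤ)) := by
            have : ((⟨(-n).toNat, hi⟩ : Fin d) : ℤ) = ((-n).toNat : ℤ) := rfl
            rw [this]
            omega
          rw [hn', coeff_psi0_neg, sub_self]
    let e : (Fin d → K) ≃ₗ[K] LinearMap.ker g :=
      (LinearEquiv.ofInjective ψ hinj).trans (LinearEquiv.ofEq _ _ hrange)
    have hfin : FiniteDimensional K (LinearMap.ker g) := Module.Finite.equiv e
    have hrank : Module.finrank K (LinearMap.ker g) = d := by
      rw [← e.finrank_eq]
      simp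
    exact ⟨LinearMap.ker g, hset, hfin, by rw [hrank]; exact hord⟩
end

section
/- Let K be a field, d a natural number, and let P∞ := K⸨X⸩ / (X·K⟦X⟧) be the quotient of the K⟦X⟧-module of formal Laurent series by the submodule of power series with zero constant term. Let A be a d × d matrix with entries in K⟦X⟧ such that det A ≠ 0. Then the K⟦X⟧-linear map (Fin d → P∞) → (Fin d → P∞) given by v ↦ A · v (matrix–vector multiplication using the scalar action of K⟦X⟧ on P∞) is surjective, and its kernel is a K-vector space of finite dimension equal to the order of det A. -/
open PowerSeries

variable {K : Type*}

namespace LaurentQuotAux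

variable [Field K]

/-- The submodule `X·K⟦X⟧` of `K⸨X⸩`. -/
noncomputable abbrev NX (K : Type*) [Field K] : Submodule (PowerSeries K) (LaurentSeries K) :=
  Submodule.span (PowerSeries K)
    {(algebraMap (PowerSeries K) (LaurentSeries K)) (PowerSeries.X : PowerSeries K)}

/-- The quotient map `K⸨X⸩ → P∞` as a `K⟦X⟧`-linear map. -/
noncomputable abbrev pq : LaurentSeries K →ₗ[PowerSeries K] LaurentQuot K :=
  (NX K).mkQ

lemma algebraMap_LS_injective :
    Function.Injective (algebraMap (PowerSeries K) (LaurentSeries K)) := by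
  rw [LaurentSeries.coe_algebraMap]
  exact HahnSeries.ofPowerSeries_injective

lemma mem_NX {z : LaurentSeries K} :
    z ∈ NX K ↔ ∃ r : PowerSeries K,
      algebraMap (PowerSeries K) (LaurentSeries K) (r * PowerSeries.X) = z := by
  rw [Submodule.mem_span_singleton]
  constructor
  · rintro ⟨r, rfl⟩
    exact ⟨r, by rw [map_mul, ← Algebra.smul_def]⟩
  · rintro ⟨r, rfl⟩
    exact ⟨r, by rw [map_mul, ← Algebra.smul_def]⟩

lemma pq_one_ne_zero : pq (1 : LaurentSeries K) ≠ 0 := by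
  intro h
  rw [Submodule.mkQ_apply, Submodule.Quotient.mk_eq_zero, mem_NX] at h
  obtain ⟨r, hr⟩ := h
  have h1 : r * PowerSeries.X = 1 := algebraMap_LS_injective (by rw [hr, map_one])
  have h2 := congrArg (PowerSeries.constantCoeff (R := K)) h1
  simp at h2

lemma pq_smul (r : PowerSeries K) (z : LaurentSeries K) :
    pq (algebraMap (PowerSeries K) (LaurentSeries K) r * z) = r • pq z := by
  rw [← Algebra.smul_def, map_smul]

lemma pq_smulK (c : K) (z : LaurentSeries K) : pq (c • z) = c • pq z :=
  Submodule.Quotient.mk_smul (NX K) c z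

lemma smul_one_K (c : K) :
    c • (1 : LaurentSeries K) =
      algebraMap (PowerSeries K) (LaurentSeries K) (PowerSeries.C (R := K) c) := by
  conv_lhs => rw [← one_smul (PowerSeries K) (1 : LaurentSeries K)]
  rw [← smul_assoc, PowerSeries.smul_eq_C_mul, mul_one, Algebra.smul_def, mul_one]

lemma X_smul_pq_one : (PowerSeries.X : PowerSeries K) • pq (1 : LaurentSeries K) = 0 := by
  rw [← map_smul, Algebra.smul_def, mul_one, Submodule.mkQ_apply,
    Submodule.Quotient.mk_eq_zero]
  exact Submodule.mem_span_singleton_self _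

lemma exists_of_X_smul_eq_zero (m : LaurentQuot K)
    (h : (PowerSeries.X : PowerSeries K) • m = 0) :
    ∃ c : K, m = c • pq (1 : LaurentSeries K) := by
  obtain ⟨z, rfl⟩ := Submodule.mkQ_surjective (NX K) m
  rw [show (NX K).mkQ z = pq z from rfl, ← map_smul, Algebra.smul_def,
    Submodule.mkQ_apply, Submodule.Quotient.mk_eq_zero, mem_NX] at h
  obtain ⟨r, hr⟩ := h
  have hXne : algebraMap (PowerSeries K) (LaurentSeries K) PowerSeries.X ≠ 0 := fun h0 =>
    PowerSeries.X_ne_zero (algebraMap_LS_injective (by rw [h0, map_zero]))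
  have hz : z = algebraMap (PowerSeries K) (LaurentSeries K) r := by
    apply mul_left_cancel₀ hXne
    rw [← hr, map_mul, mul_comm]
  set c : K := PowerSeries.constantCoeff (R := K) r with hc
  refine ⟨c, ?_⟩
  have hdvd : (PowerSeries.X : PowerSeries K) ∣ (r - PowerSeries.C (R := K) c) :=
    PowerSeries.X_dvd_iff.mpr (by simp [hc])
  obtain ⟨t, ht⟩ := hdvd
  have hrdec : r = PowerSeries.C (R := K) c + PowerSeries.X * t := by
    rw [← ht]; ring
  have hXt : pq (algebraMap (PowerSeries K) (LaurentSeries K) (PowerSeries.X * t)) = 0 := by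
    rw [Submodule.mkQ_apply, Submodule.Quotient.mk_eq_zero, mem_NX]
    exact ⟨t, by rw [mul_comm]⟩
  have key : pq z = pq (algebraMap (PowerSeries K) (LaurentSeries K) (PowerSeries.C (R := K) c)) := by
    rw [hz]
    conv_lhs => rw [hrdec]
    rw [map_add, map_add, hXt, add_zero]
  rw [show (NX K).mkQ z = pq z from rfl, key, ← smul_one_K, pq_smulK]

/-- The matrix action on `(Fin d → P∞)` as a `K`-linear map. -/
noncomputable def Phi {d : ℕ} (A : Matrix (Fin d) (Fin d) (PowerSeries K)) :
    (Fin d → LaurentQuot K) →ₗ[K] (Fin d → LaurentQuot K) where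
  toFun v i := ∑ j, A i j • v j
  map_add' u v := by
    funext i
    simp [smul_add, Finset.sum_add_distrib]
  map_smul' c v := by
    funext i
    simp only [Pi.smul_apply, RingHom.id_apply]
    rw [Finset.smul_sum]
    exact Finset.sum_congr rfl fun j _ => smul_comm _ _ _

@[simp] lemma Phi_apply {d : ℕ} (A : Matrix (Fin d) (Fin d) (PowerSeries K))
    (v : Fin d → LaurentQuot K) (i : Fin d) : Phi A v i = ∑ j, A i j • v j := rfl

lemma Phi_mul {d : ℕ} (A B : Matrix (Fin d) (Fin d) (PowerSeries K)) :
    Phi (K := K) (A * B) = (Phi A) ∘ₗ (Phi B) := by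
  apply LinearMap.ext; intro v
  funext i
  simp only [Phi_apply, LinearMap.comp_apply, Matrix.mul_apply, Finset.sum_smul, mul_smul,
    Finset.smul_sum]
  rw [Finset.sum_comm]

lemma Phi_one {d : ℕ} : Phi (K := K) (1 : Matrix (Fin d) (Fin d) (PowerSeries K)) =
    LinearMap.id := by
  apply LinearMap.ext; intro v
  funext i
  simp [Matrix.one_apply, ite_smul]

lemma ker_phi_unit {d : ℕ} (Q : Matrix (Fin d) (Fin d) (PowerSeries K)) [Invertible Q] :
    LinearMap.ker (Phi (K := K) Q) = ⊥ := by
  rw [LinearMap.ker_eq_bot]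
  intro x y hxy
  have h2 := congrArg (Phi (K := K) (⅟Q)) hxy
  rwa [← LinearMap.comp_apply, ← LinearMap.comp_apply, ← Phi_mul, invOf_mul_self, Phi_one,
    LinearMap.id_apply, LinearMap.id_apply] at h2

lemma phi_surj {d : ℕ} (A : Matrix (Fin d) (Fin d) (PowerSeries K)) (hA : A.det ≠ 0) :
    Function.Surjective (Phi (K := K) A) := by
  classical
  set A2 : Matrix (Fin d) (Fin d) (LaurentSeries K) :=
    A.map (algebraMap (PowerSeries K) (LaurentSeries K)) with hA2def
  have hdet : A2.det ≠ 0 := by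
    rw [hA2def, ← RingHom.mapMatrix_apply, ← RingHom.map_det]
    exact fun h => hA (algebraMap_LS_injective (by rw [h, map_zero]))
  haveI : Invertible A2 := A2.invertibleOfIsUnitDet (isUnit_iff_ne_zero.mpr hdet)
  intro v
  choose y hy using fun j => Submodule.mkQ_surjective (NX K) (v j)
  refine ⟨fun j => pq ((⅟A2).mulVec y j), ?_⟩
  funext i
  have hsmul : ∀ (j : Fin d) (z : LaurentSeries K), A i j • pq z = pq (A2 i j * z) :=
    fun j z => by rw [hA2def, Matrix.map_apply, pq_smul]
  show (∑ j, A i j • pq ((⅟A2).mulVec y j)) = v i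
  rw [Finset.sum_congr rfl fun j _ => hsmul j _, ← map_sum]
  have hmv : (∑ j, A2 i j * (⅟A2).mulVec y j) = A2.mulVec ((⅟A2).mulVec y) i := rfl
  rw [hmv, Matrix.mulVec_mulVec, mul_invOf_self, Matrix.one_mulVec]
  exact hy i

lemma ker_phi_diag {d : ℕ} (j : Fin d) :
    LinearMap.ker (Phi (K := K)
        (Matrix.diagonal fun k => if k = j then (PowerSeries.X : PowerSeries K) else 1)) =
      Submodule.span K {Pi.single j (pq (1 : LaurentSeries K))} := by
  classical
  set D : Matrix (Fin d) (Fin d) (PowerSeries K) :=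
    Matrix.diagonal fun k => if k = j then (PowerSeries.X : PowerSeries K) else 1 with hD
  have happ : ∀ (v : Fin d → LaurentQuot K) (i : Fin d),
      Phi (K := K) D v i = (if i = j then (PowerSeries.X : PowerSeries K) else 1) • v i := by
    intro v i
    rw [Phi_apply]
    rw [Finset.sum_eq_single i]
    · rw [hD, Matrix.diagonal_apply_eq]
    · intro k _ hk
      rw [hD, Matrix.diagonal_apply_ne _ (Ne.symm hk), zero_smul]
    · intro h; exact absurd (Finset.mem_univ i) h
  ext v
  rw [LinearMap.mem_ker, Submodule.mem_span_singleton]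
  constructor
  · intro hv
    have h0 : ∀ i, (if i = j then (PowerSeries.X : PowerSeries K) else 1) • v i = 0 := by
      intro i
      rw [← happ v i, hv, Pi.zero_apply]
    have hvi : ∀ i, i ≠ j → v i = 0 := by
      intro i hi
      have := h0 i
      rwa [if_neg hi, one_smul] at this
    have hXj : (PowerSeries.X : PowerSeries K) • v j = 0 := by
      have := h0 j
      rwa [if_pos rfl] at this
    obtain ⟨c, hc⟩ := exists_of_X_smul_eq_zero (v j) hXj
    refine ⟨c, ?_⟩
    funext i
    by_cases hi : i = j
    · subst hi
      simp [hc]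
    · simp [Pi.single_eq_of_ne hi, hvi i hi]
  · rintro ⟨c, rfl⟩
    funext i
    rw [happ]
    by_cases hi : i = j
    · subst hi
      rw [if_pos rfl, Pi.smul_apply, Pi.single_eq_same, smul_comm, X_smul_pq_one, smul_zero]
      rfl
    · rw [if_neg hi, Pi.smul_apply, Pi.single_eq_of_ne hi, smul_zero, smul_zero]
      rfl

universe uV in
lemma comp_ker {V W U : Type uV} [AddCommGroup V] [Module K V] [AddCommGroup W] [Module K W]
    [AddCommGroup U] [Module K U]
    (f : W →ₗ[K] U) (g : V →ₗ[K] W) (hg : Function.Surjective g)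
    (h1 : FiniteDimensional K (LinearMap.ker f)) (h2 : FiniteDimensional K (LinearMap.ker g)) :
    FiniteDimensional K (LinearMap.ker (f ∘ₗ g)) ∧
      Module.finrank K (LinearMap.ker (f ∘ₗ g)) =
        Module.finrank K (LinearMap.ker f) + Module.finrank K (LinearMap.ker g) := by
  have hsub : ∀ x : LinearMap.ker (f ∘ₗ g), g x ∈ LinearMap.ker f := fun x => by
    have hx := x.2
    rw [LinearMap.mem_ker, LinearMap.comp_apply] at hx
    rw [LinearMap.mem_ker]
    exact hx
  set h : LinearMap.ker (f ∘ₗ g) →ₗ[K] LinearMap.ker f :=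
    LinearMap.codRestrict _ (g ∘ₗ (LinearMap.ker (f ∘ₗ g)).subtype) hsub with hh
  have hker : LinearMap.ker h =
      Submodule.comap (LinearMap.ker (f ∘ₗ g)).subtype (LinearMap.ker g) := by
    ext x
    rw [LinearMap.mem_ker, Submodule.mem_comap, LinearMap.mem_ker, Subtype.ext_iff]
    exact Iff.rfl
  have hle : LinearMap.ker g ≤ LinearMap.ker (f ∘ₗ g) := by
    intro x hx
    rw [LinearMap.mem_ker] at hx ⊢
    simp [LinearMap.mem_ker.mp hx]
  have eker : (LinearMap.ker h) ≃ₗ[K] LinearMap.ker g :=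
    (LinearEquiv.ofEq _ _ hker).trans (Submodule.comapSubtypeEquivOfLe hle)
  have hsurjh : Function.Surjective h := by
    rintro ⟨y, hy⟩
    obtain ⟨x, hx⟩ := hg y
    have hxker : x ∈ LinearMap.ker (f ∘ₗ g) := by
      rw [LinearMap.mem_ker, LinearMap.comp_apply, hx]
      exact LinearMap.mem_ker.mp hy
    refine ⟨⟨x, hxker⟩, Subtype.ext ?_⟩
    exact hx
  haveI hFDkerh : FiniteDimensional K (LinearMap.ker h) := eker.symm.finiteDimensional
  haveI hFD : FiniteDimensional K (LinearMap.ker (f ∘ₗ g)) := by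
    have hre : Module.rank K (LinearMap.ker (f ∘ₗ g)) =
        Module.rank K (LinearMap.ker f) + Module.rank K (LinearMap.ker h) :=
      LinearMap.rank_eq_of_surjective (f := h) hsurjh
    have hrlt : Module.rank K (LinearMap.ker (f ∘ₗ g)) < Cardinal.aleph0 := by
      rw [hre]
      exact Cardinal.add_lt_aleph0 (Module.rank_lt_aleph0_iff.mpr h1)
        (Module.rank_lt_aleph0_iff.mpr hFDkerh)
    exact Module.rank_lt_aleph0_iff.mp hrlt
  refine ⟨hFD, ?_⟩
  have hrn := LinearMap.finrank_range_add_finrank_ker h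
  rw [LinearMap.range_eq_top.mpr hsurjh, finrank_top, eker.finrank_eq] at hrn
  exact hrn.symm

lemma ker_phi_finrank {d : ℕ} (n : ℕ) :
    ∀ (A : Matrix (Fin d) (Fin d) (PowerSeries K)), A.det ≠ 0 → A.det.order = (n : ℕ∞) →
      FiniteDimensional K (LinearMap.ker (Phi (K := K) A)) ∧
        Module.finrank K (LinearMap.ker (Phi (K := K) A)) = n := by
  classical
  induction n with
  | zero =>
    intro A hA hord
    have hconst : PowerSeries.constantCoeff (R := K) A.det ≠ 0 := by
      intro h0
      obtain ⟨t, ht⟩ := PowerSeries.X_dvd_iff.mpr h0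
      have h1 : (1 : ℕ∞) ≤ A.det.order := by
        calc (1 : ℕ∞) = (PowerSeries.X : PowerSeries K).order := PowerSeries.order_X.symm
          _ ≤ (PowerSeries.X : PowerSeries K).order + t.order := le_self_add
          _ ≤ (PowerSeries.X * t).order := PowerSeries.le_order_mul _ _
          _ = A.det.order := by rw [← ht]
      rw [hord] at h1
      simp at h1
    have hu : IsUnit A.det :=
      PowerSeries.isUnit_iff_constantCoeff.mpr (isUnit_iff_ne_zero.mpr hconst)
    haveI := A.invertibleOfIsUnitDet hu
    rw [ker_phi_unit A]
    exact ⟨FiniteDimensional.of_rank_eq_zero (rank_bot _ _), finrank_bot _ _⟩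
  | succ n ih =>
    intro A hA hord
    -- the constant term of the determinant vanishes
    have h0 : PowerSeries.constantCoeff (R := K) A.det = 0 := by
      rw [← PowerSeries.coeff_zero_eq_constantCoeff_apply]
      apply PowerSeries.coeff_of_lt_order
      rw [hord]
      exact_mod_cast n.succ_pos
    have hdet0 : (A.map (PowerSeries.constantCoeff (R := K))).det = 0 := by
      rw [← RingHom.mapMatrix_apply, ← RingHom.map_det, h0]
    obtain ⟨c, hc0, hc⟩ := (Matrix.exists_mulVec_eq_zero_iff).mpr hdet0
    obtain ⟨j, hj⟩ := Function.ne_iff.mp hc0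
    -- the column-operation matrix
    set Q : Matrix (Fin d) (Fin d) (PowerSeries K) :=
      (1 : Matrix (Fin d) (Fin d) (PowerSeries K)).updateCol j
        (fun k => PowerSeries.C (R := K) (c k)) with hQ
    have hdetQ : Q.det = PowerSeries.C (R := K) (c j) := by
      have h1 : Q.det = Matrix.cramer (1 : Matrix (Fin d) (Fin d) (PowerSeries K))
          (fun k => PowerSeries.C (R := K) (c k)) j := (Matrix.cramer_apply _ _ _).symm
      rwa [Matrix.cramer_one] at h1
    have hQdetu : IsUnit Q.det := by
      rw [hdetQ]
      exact (isUnit_iff_ne_zero.mpr (by simpa using hj)).map (PowerSeries.C (R := K))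
    haveI : Invertible Q := Q.invertibleOfIsUnitDet hQdetu
    -- the column j of A * Q is divisible by X
    have hcol : ∀ i, PowerSeries.constantCoeff (R := K) ((A * Q) i j) = 0 := by
      intro i
      rw [Matrix.mul_apply, map_sum]
      have hQj : ∀ k, Q k j = PowerSeries.C (R := K) (c k) := fun k => Matrix.updateCol_self
      have hmv := congrFun hc i
      simp only [Matrix.mulVec, dotProduct, Matrix.map_apply, Pi.zero_apply] at hmv
      rw [← hmv]
      apply Finset.sum_congr rfl
      intro k _
      rw [hQj k, map_mul, PowerSeries.constantCoeff_C]
    choose t ht using fun i => PowerSeries.X_dvd_iff.mpr (hcol i)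
    set D : Matrix (Fin d) (Fin d) (PowerSeries K) :=
      Matrix.diagonal fun k => if k = j then (PowerSeries.X : PowerSeries K) else 1 with hD
    set B : Matrix (Fin d) (Fin d) (PowerSeries K) :=
      Matrix.of fun i k => if k = j then t i else (A * Q) i k with hB
    have hfact : A * Q = B * D := by
      apply Matrix.ext
      intro i k
      rw [hD, Matrix.mul_diagonal, hB]
      by_cases hk : k = j
      · rw [Matrix.of_apply, if_pos hk, if_pos hk, hk, ht i]
        exact mul_comm _ _
      · rw [Matrix.of_apply, if_neg hk, if_neg hk, mul_one]
    have hdetD : D.det = PowerSeries.X := by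
      rw [hD, Matrix.det_diagonal]
      simp
    have hdet_eq : A.det * Q.det = B.det * PowerSeries.X := by
      have := congrArg Matrix.det hfact
      rwa [Matrix.det_mul, Matrix.det_mul, hdetD] at this
    have hBne : B.det ≠ 0 := by
      intro hB0
      rw [hB0, zero_mul] at hdet_eq
      rcases mul_eq_zero.mp hdet_eq with h | h
      · exact hA h
      · exact hQdetu.ne_zero h
    have hordB : B.det.order = (n : ℕ∞) := by
      have h1 := congrArg PowerSeries.order hdet_eq
      rw [PowerSeries.order_mul, PowerSeries.order_mul, hord,
        PowerSeries.order_zero_of_unit hQdetu, PowerSeries.order_X, add_zero] at h1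
      have h2 : (n : ℕ∞) + 1 = B.det.order + 1 := by
        rw [← h1]
        push_cast
        ring
      exact (WithTop.add_right_cancel (by simp : (1 : ℕ∞) ≠ ⊤) h2).symm
    obtain ⟨hFDB, hrkB⟩ := ih B hBne hordB
    -- kernel of the diagonal factor
    have hFDD : FiniteDimensional K (LinearMap.ker (Phi (K := K) D)) := by
      rw [hD, ker_phi_diag j]
      exact FiniteDimensional.span_of_finite K (Set.finite_singleton _)
    have hsingle_ne : Pi.single j (pq (1 : LaurentSeries K)) ≠ (0 : Fin d → LaurentQuot K) := by
      intro hs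
      apply pq_one_ne_zero (K := K)
      have := congrFun hs j
      rwa [Pi.single_eq_same, Pi.zero_apply] at this
    have hrkD : Module.finrank K (LinearMap.ker (Phi (K := K) D)) = 1 := by
      rw [hD, ker_phi_diag j]
      exact finrank_span_singleton hsingle_ne
    have hDdetne : D.det ≠ 0 := by rw [hdetD]; exact PowerSeries.X_ne_zero
    obtain ⟨hFD1, hrk1⟩ := comp_ker (Phi (K := K) B) (Phi (K := K) D)
      (phi_surj D hDdetne) hFDB hFDD
    have hPhiAQ : Phi (K := K) (A * Q) = (Phi (K := K) B) ∘ₗ (Phi (K := K) D) := by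
      rw [hfact, Phi_mul]
    have hFDAQ : FiniteDimensional K (LinearMap.ker (Phi (K := K) (A * Q))) := by
      rw [hPhiAQ]; exact hFD1
    have hrkAQ : Module.finrank K (LinearMap.ker (Phi (K := K) (A * Q))) = n + 1 := by
      rw [hPhiAQ, hrk1, hrkB, hrkD]
    -- now cancel the invertible Q
    have hQinv_surj : Function.Surjective (Phi (K := K) (⅟Q)) := by
      intro v
      exact ⟨Phi (K := K) Q v, by
        rw [← LinearMap.comp_apply, ← Phi_mul, invOf_mul_self, Phi_one, LinearMap.id_apply]⟩
    haveI : Invertible (⅟Q) := invertibleInvOf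
    have hFDQinv : FiniteDimensional K (LinearMap.ker (Phi (K := K) (⅟Q))) := by
      rw [ker_phi_unit]
      exact FiniteDimensional.of_rank_eq_zero (rank_bot _ _)
    have hrkQinv : Module.finrank K (LinearMap.ker (Phi (K := K) (⅟Q))) = 0 := by
      rw [ker_phi_unit]
      exact finrank_bot _ _
    obtain ⟨hFD2, hrk2⟩ := comp_ker (Phi (K := K) (A * Q)) (Phi (K := K) (⅟Q))
      hQinv_surj hFDAQ hFDQinv
    have hcompA : (Phi (K := K) (A * Q)) ∘ₗ (Phi (K := K) (⅟Q)) = Phi (K := K) A := by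
      rw [← Phi_mul, mul_assoc, mul_invOf_self, mul_one]
    rw [hcompA] at hFD2 hrk2
    rw [hrkAQ, hrkQinv, add_zero] at hrk2
    exact ⟨hFD2, hrk2⟩

end LaurentQuotAux

open LaurentQuotAux in
/-- Let `A` be a `d × d` matrix with entries in `K⟦X⟧` with `det A ≠ 0`.
Then the `K⟦X⟧`-linear map `(Fin d → P∞) → (Fin d → P∞)`, `v ↦ A · v` (matrix–vector
multiplication via the scalar action of `K⟦X⟧` on `P∞`) is surjective, and its kernel is
a `K`-vector space of finite dimension equal to the order of `det A`. -/
theorem surjective_and_finrank_ker_matrix_smul_laurentQuot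
    [Field K] (d : ℕ) (A : Matrix (Fin d) (Fin d) (PowerSeries K)) (hA : A.det ≠ 0) :
    Function.Surjective
      (fun v : Fin d → LaurentQuot K => fun i => ∑ j, A i j • v j) ∧
    ∃ W : Submodule K (Fin d → LaurentQuot K),
      (W : Set (Fin d → LaurentQuot K)) =
        {v : Fin d → LaurentQuot K | ∀ i, ∑ j, A i j • v j = 0} ∧
      FiniteDimensional K W ∧
      (Module.finrank K W : ℕ∞) = A.det.order := by
  constructor
  · exact phi_surj A hA
  · obtain ⟨n, hn⟩ := WithTop.ne_top_iff_exists.mp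
      ((PowerSeries.order_finite_iff_ne_zero.mpr hA).ne)
    obtain ⟨hFD, hrk⟩ := ker_phi_finrank n A hA hn.symm
    refine ⟨LinearMap.ker (Phi (K := K) A), ?_, hFD, by rw [hrk]; exact hn⟩
    ext v
    simp only [SetLike.mem_coe, LinearMap.mem_ker, Set.mem_setOf_eq, funext_iff, Phi_apply,
      Pi.zero_apply]
end
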